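/- arXiv:1411.5217 — 2 statements merged into one kernel-verified Lean document; each statement's English description precedes it below -/
import Mathlib

section
/- The function g(t) defined for t ∈ [0,1] by (1+g(t))/2 = ∫₀¹∫₀¹ (1 − ξ(1 + t r^{ν/δ} s^{μ/δ})) / ((1−ξ)(1 + t r^{ν/δ} s^{μ/δ})²) dr ds satisfies g(0) = 1 and the differential equation d/dt ( t^{δ/ν} (1+g(t))/2 ) = (δ²/(μν)) t^{δ/ν−1} ∫₀¹ (1 − ξ(1+st)) s^{δ/μ−1} / ((1−ξ)(1+st)²) ds. -/
open MeasureTheory Real Set intervalIntegral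

namespace Stmt2Aux

noncomputable def f0 (ξ u : ℝ) : ℝ := (1 - ξ * (1 + u)) / ((1 - ξ) * (1 + u) ^ 2)

lemma f0_contAt {ξ : ℝ} (hξ1 : ξ < 1) {u : ℝ} (hu : 0 ≤ u) : ContinuousAt (f0 ξ) u := by
  have h1 : (0:ℝ) < 1 - ξ := by linarith
  have h2 : (0:ℝ) < (1 + u) ^ 2 := by positivity
  exact ContinuousAt.div (by fun_prop) (by fun_prop) (mul_pos h1 h2).ne'

lemma f0_bound {ξ : ℝ} (hξ0 : 0 ≤ ξ) (hξ1 : ξ < 1) {u : ℝ} (hu : 0 ≤ u) :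
    |f0 ξ u| ≤ (1 + ξ) / (1 - ξ) := by
  have h1 : (0:ℝ) < 1 - ξ := by linarith
  have h2 : (0:ℝ) < (1 + u) ^ 2 := by positivity
  have hD : (0:ℝ) < (1 - ξ) * (1 + u) ^ 2 := mul_pos h1 h2
  rw [f0, abs_div, abs_of_pos hD, div_le_div_iff₀ hD h1]
  have hN : |1 - ξ * (1 + u)| ≤ 1 + ξ * (1 + u) := by
    have := abs_sub (1:ℝ) (ξ * (1 + u))
    simpa [abs_of_nonneg (by positivity : (0:ℝ) ≤ ξ * (1 + u))] using this
  have e1 : (1:ℝ) ≤ (1 + u) ^ 2 := by nlinarith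
  have e2 : (1 + u) ≤ (1 + u) ^ 2 := by nlinarith
  nlinarith [mul_le_mul_of_nonneg_right hN h1.le,
    mul_nonneg (mul_nonneg hξ0 h1.le) (by nlinarith : (0:ℝ) ≤ (1 + u) ^ 2 - (1 + u)),
    mul_nonneg h1.le (by nlinarith : (0:ℝ) ≤ (1 + u) ^ 2 - 1)]

lemma intInt_of_bound {f : ℝ → ℝ} {x e C : ℝ} (hx : 0 ≤ x) (he : -1 < e)
    (hm : AEStronglyMeasurable f (volume.restrict (Ioc 0 x)))
    (hb : ∀ w ∈ Ioc (0:ℝ) x, |f w| ≤ C * w ^ e) :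
    IntervalIntegrable f volume 0 x := by
  rw [intervalIntegrable_iff_integrableOn_Ioc_of_le hx]
  have hg : IntegrableOn (fun w => C * w ^ e) (Ioc 0 x) := by
    have h := (intervalIntegrable_rpow' (a := 0) (b := x) he).const_mul C
    rwa [intervalIntegrable_iff_integrableOn_Ioc_of_le hx] at h
  exact hg.mono' hm
    ((ae_restrict_iff' measurableSet_Ioc).2 (ae_of_all _ fun w hw => by
      simpa [Real.norm_eq_abs] using hb w hw))


lemma scale_int (ψ : ℝ → ℝ) (e : ℝ) {x : ℝ} (hx : 0 < x) :
    ∫ v in (0:ℝ)..1, ψ (x * v) * v ^ e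
      = x ^ (-(e + 1)) * ∫ u in (0:ℝ)..x, ψ u * u ^ e := by
  have A := intervalIntegral.integral_comp_mul_right (a := 0) (b := 1)
    (fun u => ψ u * u ^ e) hx.ne'
  simp only [zero_mul, one_mul, smul_eq_mul] at A
  have B : (∫ v in (0:ℝ)..1, ψ (v * x) * (v * x) ^ e)
      = ∫ v in (0:ℝ)..1, ψ (x * v) * v ^ e * x ^ e := by
    apply intervalIntegral.integral_congr
    intro v hv
    rw [uIcc_of_le zero_le_one] at hv
    show ψ (v * x) * (v * x) ^ e = ψ (x * v) * v ^ e * x ^ e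
    rw [Real.mul_rpow hv.1 hx.le, mul_comm v x]; ring
  rw [B, intervalIntegral.integral_mul_const] at A
  have hxe : (0:ℝ) < x ^ e := Real.rpow_pos_of_pos hx e
  have hh : x ^ (-(e + 1)) * x ^ e = x⁻¹ := by
    rw [← Real.rpow_add hx, show -(e + 1) + e = -1 by ring, Real.rpow_neg_one]
  apply mul_right_cancel₀ hxe.ne'
  rw [A, mul_right_comm, hh]

lemma subst_rpow {φ : ℝ → ℝ} {q M : ℝ} (hq : 0 < q)
    (hc : ContinuousOn φ (Ioc 0 1)) (hb : ∀ y ∈ Ioc (0:ℝ) 1, |φ y| ≤ M) :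
    ∫ s in (0:ℝ)..1, φ (s ^ q) = q⁻¹ * ∫ w in (0:ℝ)..1, φ w * w ^ (1 / q - 1) := by
  have hM : 0 ≤ M := le_trans (abs_nonneg _) (hb 1 ⟨zero_lt_one, le_refl 1⟩)
  have he : (-1 : ℝ) < 1 / q - 1 := by
    have : 0 < 1 / q := by positivity
    linarith
  set g : ℝ → ℝ := fun w => φ w * w ^ (1 / q - 1) * q⁻¹ with hgdef
  have hFc : Continuous fun x : ℝ => x ^ q := by
    rw [continuous_iff_continuousAt]
    exact fun x => Real.continuousAt_rpow_const x q (Or.inr hq.le)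
  -- continuity of g on Ioc 0 1
  have hgc : ContinuousOn g (Ioc 0 1) := by
    apply ContinuousOn.mul _ continuousOn_const
    exact hc.mul fun w hw =>
      (Real.continuousAt_rpow_const w _ (Or.inl hw.1.ne')).continuousWithinAt
  -- pointwise identity on Ioc 0 1
  have heq : ∀ x ∈ Ioc (0:ℝ) 1, g (x ^ q) * (q * x ^ (q - 1)) = φ (x ^ q) := by
    intro x hx
    have hx0 : 0 < x := hx.1
    calc φ (x ^ q) * (x ^ q) ^ (1 / q - 1) * q⁻¹ * (q * x ^ (q - 1))
        = φ (x ^ q) * ((x ^ q) ^ (1 / q - 1) * x ^ (q - 1)) * (q⁻¹ * q) := by ring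
      _ = φ (x ^ q) * x ^ (q * (1 / q - 1) + (q - 1)) * 1 := by
          rw [← Real.rpow_mul hx0.le, ← Real.rpow_add hx0, inv_mul_cancel₀ hq.ne']
      _ = φ (x ^ q) := by
          rw [show q * (1 / q - 1) + (q - 1) = 0 by field_simp; ring, Real.rpow_zero]; ring
  -- bound on g
  have hgb : ∀ w ∈ Ioc (0:ℝ) 1, |g w| ≤ M * q⁻¹ * w ^ (1 / q - 1) := by
    intro w hw
    have hw0 : (0:ℝ) < w ^ (1 / q - 1) := Real.rpow_pos_of_pos hw.1 _
    have : |g w| = |φ w| * w ^ (1 / q - 1) * q⁻¹ := by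
      rw [hgdef]
      rw [abs_mul, abs_mul, abs_of_pos hw0, abs_of_pos (by positivity : (0:ℝ) < q⁻¹)]
    rw [this, mul_right_comm]
    exact mul_le_mul_of_nonneg_right
      (mul_le_mul_of_nonneg_right (hb w hw) (by positivity)) hw0.le
  have hg1 : IntegrableOn g (Icc (0:ℝ) 1) := by
    rw [integrableOn_Icc_iff_integrableOn_Ioc]
    have := intInt_of_bound (f := g) zero_le_one he
      (hgc.aestronglyMeasurable measurableSet_Ioc) hgb
    rwa [intervalIntegrable_iff_integrableOn_Ioc_of_le zero_le_one] at this
  have key := intervalIntegral.integral_comp_mul_deriv''' (a := 0) (b := 1)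
    (f := fun x => x ^ q) (f' := fun x => q * x ^ (q - 1)) (g := g)
    (hFc.continuousOn)
    (fun x hx => by
      have hx' : x ∈ Ioo (0:ℝ) 1 := by simpa using hx
      exact (Real.hasDerivAt_rpow_const (Or.inl hx'.1.ne')).hasDerivWithinAt)
    (by
      apply hgc.mono
      rintro _ ⟨y, hy, rfl⟩
      have hy' : y ∈ Ioo (0:ℝ) 1 := by simpa using hy
      exact ⟨Real.rpow_pos_of_pos hy'.1 q, Real.rpow_le_one hy'.1.le hy'.2.le hq.le⟩)
    (by
      apply hg1.mono_set
      rintro _ ⟨y, hy, rfl⟩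
      rw [uIcc_of_le zero_le_one] at hy
      exact ⟨Real.rpow_nonneg hy.1 q, Real.rpow_le_one hy.1 hy.2 hq.le⟩)
    (by
      rw [uIcc_of_le zero_le_one, integrableOn_Icc_iff_integrableOn_Ioc]
      have hφF : IntegrableOn (fun x => φ (x ^ q)) (Ioc (0:ℝ) 1) := by
        have hcφF : ContinuousOn (fun x => φ (x ^ q)) (Ioc (0:ℝ) 1) := by
          apply hc.comp hFc.continuousOn
          intro y hy
          exact ⟨Real.rpow_pos_of_pos hy.1 q, Real.rpow_le_one hy.1.le hy.2 hq.le⟩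
        have := intInt_of_bound (f := fun x => φ (x ^ q)) (C := M) (e := 0) zero_le_one
          (by norm_num) (hcφF.aestronglyMeasurable measurableSet_Ioc)
          (fun w hw => by
            rw [Real.rpow_zero, mul_one]
            exact hb _ ⟨Real.rpow_pos_of_pos hw.1 q, Real.rpow_le_one hw.1.le hw.2 hq.le⟩)
        rwa [intervalIntegrable_iff_integrableOn_Ioc_of_le zero_le_one] at this
      apply hφF.congr_fun (fun x hx => (heq x hx).symm) measurableSet_Ioc)
  -- key : ∫ x in 0..1, (g ∘ fun x => x ^ q) x * (q * x ^ (q-1)) = ∫ u in 0^q..1^q, g u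
  simp only [Real.zero_rpow hq.ne', Real.one_rpow] at key
  have lhs_eq : (∫ x in (0:ℝ)..1, (g ∘ fun x => x ^ q) x * (q * x ^ (q - 1)))
      = ∫ s in (0:ℝ)..1, φ (s ^ q) := by
    apply intervalIntegral.integral_congr_ae
    apply ae_of_all
    intro x hx
    rw [uIoc_of_le zero_le_one] at hx
    show g (x ^ q) * (q * x ^ (q - 1)) = φ (x ^ q)
    exact heq x hx
  rw [lhs_eq] at key
  rw [key, hgdef]
  rw [intervalIntegral.integral_mul_const, mul_comm]

noncomputable def Hfun (ξ μ δ : ℝ) (y : ℝ) : ℝ :=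
  ∫ w in (0:ℝ)..1, f0 ξ (y * w) * w ^ (δ / μ - 1)

noncomputable def Pfun (ξ μ δ : ℝ) (y : ℝ) : ℝ :=
  ∫ w in (0:ℝ)..y, f0 ξ w * w ^ (δ / μ - 1)

variable {ξ μ δ ν : ℝ}

lemma hed (hμ : 0 < μ) (hδ : 0 < δ) : (-1:ℝ) < δ / μ - 1 := by
  have : 0 < δ / μ := div_pos hδ hμ; linarith

lemma contOn_f0w {y : ℝ} (hξ1 : ξ < 1) (hy : 0 ≤ y) :
    ContinuousOn (fun w => f0 ξ (y * w) * w ^ (δ / μ - 1)) (Ioc 0 1) := by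
  apply ContinuousOn.mul
  · intro w hw
    exact ((f0_contAt hξ1 (mul_nonneg hy hw.1.le)).comp
      (by fun_prop : ContinuousAt (fun w : ℝ => y * w) w)).continuousWithinAt
  · intro w hw
    exact (Real.continuousAt_rpow_const w _ (Or.inl hw.1.ne')).continuousWithinAt

lemma intInt_f0w {y : ℝ} (hξ0 : 0 ≤ ξ) (hξ1 : ξ < 1) (hμ : 0 < μ) (hδ : 0 < δ) (hy : 0 ≤ y) :
    IntervalIntegrable (fun w => f0 ξ (y * w) * w ^ (δ / μ - 1)) volume 0 1 := by
  refine intInt_of_bound (C := (1 + ξ) / (1 - ξ)) zero_le_one (hed hμ hδ)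
    ((contOn_f0w hξ1 hy).aestronglyMeasurable measurableSet_Ioc) (fun w hw => ?_)
  rw [abs_mul, abs_of_nonneg (Real.rpow_nonneg hw.1.le _)]
  exact mul_le_mul_of_nonneg_right (f0_bound hξ0 hξ1 (mul_nonneg hy hw.1.le))
    (Real.rpow_nonneg hw.1.le _)

lemma Hfun_bound {y : ℝ} (hξ0 : 0 ≤ ξ) (hξ1 : ξ < 1) (hμ : 0 < μ) (hδ : 0 < δ) (hy : 0 ≤ y) :
    |Hfun ξ μ δ y| ≤ (1 + ξ) / (1 - ξ) * (μ / δ) := by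
  unfold Hfun
  refine (intervalIntegral.abs_integral_le_integral_abs zero_le_one).trans ?_
  have h2 : (∫ w in (0:ℝ)..1, |f0 ξ (y * w) * w ^ (δ / μ - 1)|)
      ≤ ∫ w in (0:ℝ)..1, (1 + ξ) / (1 - ξ) * w ^ (δ / μ - 1) := by
    refine intervalIntegral.integral_mono_on zero_le_one (intInt_f0w hξ0 hξ1 hμ hδ hy).abs
      ((intervalIntegrable_rpow' (hed hμ hδ)).const_mul _) (fun w hw => ?_)
    rw [abs_mul, abs_of_nonneg (Real.rpow_nonneg hw.1 _)]
    exact mul_le_mul_of_nonneg_right (f0_bound hξ0 hξ1 (mul_nonneg hy hw.1))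
      (Real.rpow_nonneg hw.1 _)
  refine h2.trans_eq ?_
  rw [intervalIntegral.integral_const_mul, integral_rpow (Or.inl (hed hμ hδ)),
    show δ / μ - 1 + 1 = δ / μ by ring, Real.one_rpow,
    Real.zero_rpow (div_pos hδ hμ).ne', sub_zero, one_div_div]

lemma Hfun_eq_Pfun {y : ℝ} (hy : 0 < y) :
    Hfun ξ μ δ y = y ^ (-(δ / μ)) * Pfun ξ μ δ y := by
  have h := scale_int (f0 ξ) (δ / μ - 1) hy
  rw [show -(δ / μ - 1 + 1) = -(δ / μ) by ring] at h
  exact h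

lemma Pfun_contOn (hξ0 : 0 ≤ ξ) (hξ1 : ξ < 1) (hμ : 0 < μ) (hδ : 0 < δ) :
    ContinuousOn (Pfun ξ μ δ) (Icc 0 1) := by
  have h := intInt_f0w (y := 1) hξ0 hξ1 hμ hδ zero_le_one
  simp only [one_mul] at h
  have h2 : IntegrableOn (fun w => f0 ξ w * w ^ (δ / μ - 1)) (uIcc (0:ℝ) 1) := by
    rw [uIcc_of_le zero_le_one, integrableOn_Icc_iff_integrableOn_Ioc]
    rwa [intervalIntegrable_iff_integrableOn_Ioc_of_le zero_le_one] at h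
  have h3 := intervalIntegral.continuousOn_primitive_interval (a := 0) (b := 1) h2
  rw [uIcc_of_le zero_le_one] at h3
  exact h3

lemma Hfun_contOn (hξ0 : 0 ≤ ξ) (hξ1 : ξ < 1) (hμ : 0 < μ) (hδ : 0 < δ) :
    ContinuousOn (Hfun ξ μ δ) (Ioc 0 1) := by
  have hnice : ContinuousOn (fun y => y ^ (-(δ / μ)) * Pfun ξ μ δ y) (Ioc 0 1) :=
    ContinuousOn.mul
      (fun y hy => (Real.continuousAt_rpow_const y _ (Or.inl hy.1.ne')).continuousWithinAt)
      ((Pfun_contOn hξ0 hξ1 hμ hδ).mono Ioc_subset_Icc_self)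
  exact hnice.congr fun y hy => Hfun_eq_Pfun hy.1

end Stmt2Aux

open Stmt2Aux

theorem stmt_2 (μ ν δ ξ : ℝ) (hμ : 0 < μ) (hν : 0 < ν) (hδ : 0 < δ)
    (hξ0 : 0 ≤ ξ) (hξ1 : ξ < 1) (g : ℝ → ℝ)
    (hg : ∀ t ∈ Icc (0:ℝ) 1,
      (1 + g t) / 2 =
        ∫ r in (0:ℝ)..1, ∫ s in (0:ℝ)..1,
          (1 - ξ * (1 + t * r ^ (ν / δ) * s ^ (μ / δ))) /
            ((1 - ξ) * (1 + t * r ^ (ν / δ) * s ^ (μ / δ)) ^ 2)) :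
    g 0 = 1 ∧
      ∀ t ∈ Ioo (0:ℝ) 1,
        HasDerivAt (fun x : ℝ => x ^ (δ / ν) * ((1 + g x) / 2))
          (δ ^ 2 / (μ * ν) * t ^ (δ / ν - 1) *
            ∫ s in (0:ℝ)..1,
              (1 - ξ * (1 + s * t)) * s ^ (δ / μ - 1) / ((1 - ξ) * (1 + s * t) ^ 2)) t := by
  have h1ξ : (0:ℝ) < 1 - ξ := by linarith
  constructor
  · have h0 := hg 0 ⟨le_refl 0, zero_le_one⟩
    simp only [zero_mul, add_zero, mul_one, one_pow, div_self h1ξ.ne',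
      intervalIntegral.integral_const, smul_eq_mul, sub_zero, one_mul] at h0
    linarith
  · intro t ht
    have hd : (0:ℝ) < δ / μ := div_pos hδ hμ
    have hcν : (0:ℝ) < δ / ν := div_pos hδ hν
    have heν : (-1:ℝ) < δ / ν - 1 := by linarith
    -- FTC for the primitive of u ↦ Hfun u * u^(δ/ν-1)
    have hGc : ContinuousOn (fun u => Hfun ξ μ δ u * u ^ (δ / ν - 1)) (Ioc 0 1) :=
      (Hfun_contOn hξ0 hξ1 hμ hδ).mul
        (fun u hu => (Real.continuousAt_rpow_const u _ (Or.inl hu.1.ne')).continuousWithinAt)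
    have hGoo : ContinuousOn (fun u => Hfun ξ μ δ u * u ^ (δ / ν - 1)) (Ioo 0 1) :=
      hGc.mono Ioo_subset_Ioc_self
    have hint : IntervalIntegrable (fun u => Hfun ξ μ δ u * u ^ (δ / ν - 1)) volume 0 t := by
      refine intInt_of_bound (C := (1 + ξ) / (1 - ξ) * (μ / δ)) ht.1.le heν
        ((hGc.mono (Ioc_subset_Ioc le_rfl ht.2.le)).aestronglyMeasurable measurableSet_Ioc)
        (fun u hu => ?_)
      rw [abs_mul, abs_of_nonneg (Real.rpow_nonneg hu.1.le _)]
      exact mul_le_mul_of_nonneg_right (Hfun_bound hξ0 hξ1 hμ hδ hu.1.le)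
        (Real.rpow_nonneg hu.1.le _)
    have hJ : HasDerivAt (fun x => ∫ u in (0:ℝ)..x, Hfun ξ μ δ u * u ^ (δ / ν - 1))
        (Hfun ξ μ δ t * t ^ (δ / ν - 1)) t :=
      intervalIntegral.integral_hasDerivAt_right hint
        (hGoo.stronglyMeasurableAtFilter isOpen_Ioo t ht)
        (hGoo.continuousAt (isOpen_Ioo.mem_nhds ht))
    have hD := hJ.const_mul (δ ^ 2 / (μ * ν))
    -- the key identity on Ioo 0 1
    have chain : ∀ x ∈ Ioo (0:ℝ) 1, x ^ (δ / ν) * ((1 + g x) / 2)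
        = δ ^ 2 / (μ * ν) * ∫ u in (0:ℝ)..x, Hfun ξ μ δ u * u ^ (δ / ν - 1) := by
      intro x hx
      obtain ⟨hx0, hx1⟩ := hx
      rw [hg x ⟨hx0.le, hx1.le⟩]
      have inner : ∀ r ∈ Icc (0:ℝ) 1,
          (∫ s in (0:ℝ)..1, (1 - ξ * (1 + x * r ^ (ν / δ) * s ^ (μ / δ))) /
            ((1 - ξ) * (1 + x * r ^ (ν / δ) * s ^ (μ / δ)) ^ 2))
          = (δ / μ) * Hfun ξ μ δ (x * r ^ (ν / δ)) := by
        intro r hr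
        have hC : 0 ≤ x * r ^ (ν / δ) := mul_nonneg hx0.le (Real.rpow_nonneg hr.1 _)
        have hsub := subst_rpow (φ := fun y => f0 ξ (x * r ^ (ν / δ) * y))
          (M := (1 + ξ) / (1 - ξ)) (div_pos hμ hδ)
          (fun y hy => ((f0_contAt hξ1 (mul_nonneg hC hy.1.le)).comp
            (by fun_prop : ContinuousAt (fun y : ℝ => x * r ^ (ν / δ) * y) y)).continuousWithinAt)
          (fun y hy => f0_bound hξ0 hξ1 (mul_nonneg hC hy.1.le))
        rw [one_div_div, inv_div] at hsub
        exact hsub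
      rw [intervalIntegral.integral_congr (g := fun r => (δ / μ) * Hfun ξ μ δ (x * r ^ (ν / δ)))
        (fun r hr => inner r (by rwa [uIcc_of_le zero_le_one] at hr)),
        intervalIntegral.integral_const_mul]
      have outer := subst_rpow (φ := fun y => Hfun ξ μ δ (x * y))
        (M := (1 + ξ) / (1 - ξ) * (μ / δ)) (div_pos hν hδ)
        ((Hfun_contOn hξ0 hξ1 hμ hδ).comp ((continuous_const.mul continuous_id).continuousOn)
          (fun y hy => ⟨mul_pos hx0 hy.1,
            le_trans (mul_le_of_le_one_right hx0.le hy.2) hx1.le⟩))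
        (fun y hy => Hfun_bound hξ0 hξ1 hμ hδ (mul_nonneg hx0.le hy.1.le))
      rw [one_div_div, inv_div] at outer
      rw [outer]
      have hsc := scale_int (Hfun ξ μ δ) (δ / ν - 1) hx0
      rw [show -(δ / ν - 1 + 1) = -(δ / ν) by ring] at hsc
      rw [hsc]
      have hxx : x ^ (δ / ν) * x ^ (-(δ / ν)) = 1 := by
        rw [← Real.rpow_add hx0]; simp
      have hcc : δ / μ * (δ / ν) = δ ^ 2 / (μ * ν) := by
        rw [div_mul_div_comm, sq]
      calc x ^ (δ / ν) * (δ / μ * (δ / ν *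
            (x ^ (-(δ / ν)) * ∫ u in (0:ℝ)..x, Hfun ξ μ δ u * u ^ (δ / ν - 1))))
          = (δ / μ * (δ / ν)) * (x ^ (δ / ν) * x ^ (-(δ / ν))) *
            ∫ u in (0:ℝ)..x, Hfun ξ μ δ u * u ^ (δ / ν - 1) := by ring
        _ = δ ^ 2 / (μ * ν) * ∫ u in (0:ℝ)..x, Hfun ξ μ δ u * u ^ (δ / ν - 1) := by
            rw [hxx, hcc, mul_one]
    have hev : (fun x : ℝ => x ^ (δ / ν) * ((1 + g x) / 2)) =ᶠ[nhds t]
        (fun x => δ ^ 2 / (μ * ν) * ∫ u in (0:ℝ)..x, Hfun ξ μ δ u * u ^ (δ / ν - 1)) :=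
      Filter.eventuallyEq_of_mem (isOpen_Ioo.mem_nhds ht) chain
    have hfin := hD.congr_of_eventuallyEq hev
    have hval : (∫ s in (0:ℝ)..1,
        (1 - ξ * (1 + s * t)) * s ^ (δ / μ - 1) / ((1 - ξ) * (1 + s * t) ^ 2))
        = Hfun ξ μ δ t := by
      unfold Hfun f0
      apply intervalIntegral.integral_congr
      intro s hs
      show (1 - ξ * (1 + s * t)) * s ^ (δ / μ - 1) / ((1 - ξ) * (1 + s * t) ^ 2)
        = (1 - ξ * (1 + t * s)) / ((1 - ξ) * (1 + t * s) ^ 2) * s ^ (δ / μ - 1)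
      rw [mul_comm t s]
      ring
    rw [hval]
    exact hfin.congr_deriv (by ring)
end

section
/- For μ, ν, δ > 0 and 0 ≤ ξ < 1, the function g with (1+g(t))/2 = ∫₀¹∫₀¹ (1 − ξ(1 + t r^{ν/δ} s^{μ/δ})) / ((1−ξ)(1 + t r^{ν/δ} s^{μ/δ})²) dr ds has the power series expansion g(t) = 1 + (2δ²/(1−ξ)) Σ_{n≥1} (−1)ⁿ (n + 1 − ξ) tⁿ / ((nν + δ)(nμ + δ)) for t ∈ [0,1). -/
open MeasureTheory Real Set

private lemma aux_hasSum (ξ : ℝ) (hξ1 : ξ < 1) (u : ℝ) (hu0 : 0 ≤ u) (hu1 : u < 1) :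
    HasSum (fun n : ℕ => (((n : ℝ) + 1 - ξ) / (1 - ξ)) * (-u) ^ n)
      ((1 - ξ * (1 + u)) / ((1 - ξ) * (1 + u) ^ 2)) := by
  have hξ : (1 : ℝ) - ξ ≠ 0 := by linarith
  have hu : (1 : ℝ) + u ≠ 0 := by positivity
  have hnorm : ‖-u‖ < 1 := by
    rw [norm_neg, Real.norm_eq_abs, abs_of_nonneg hu0]; exact hu1
  have h1 := (hasSum_coe_mul_geometric_of_norm_lt_one hnorm).mul_left (1 / (1 - ξ))
  have h2 := hasSum_geometric_of_norm_lt_one hnorm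
  have h3 := h1.add h2
  have heq : (fun n : ℕ => 1 / (1 - ξ) * ((n : ℝ) * (-u) ^ n) + (-u) ^ n)
      = fun n : ℕ => (((n : ℝ) + 1 - ξ) / (1 - ξ)) * (-u) ^ n := by
    funext n; field_simp; ring
  rw [heq] at h3
  suffices hh : (1 - ξ * (1 + u)) / ((1 - ξ) * (1 + u) ^ 2)
      = 1 / (1 - ξ) * (-u / (1 - -u) ^ 2) + (1 - -u)⁻¹ by rw [hh]; exact h3
  have : (1 : ℝ) - -u = 1 + u := by ring
  rw [this]
  field_simp
  ring

private lemma aux_summable (ξ t : ℝ) (hξ1 : ξ < 1) (ht0 : 0 ≤ t) (ht1 : t < 1) :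
    Summable (fun n : ℕ => (((n : ℝ) + 1 - ξ) / (1 - ξ)) * t ^ n) := by
  have hξ : (1 : ℝ) - ξ ≠ 0 := by linarith
  have hnorm : ‖t‖ < 1 := by rw [Real.norm_eq_abs, abs_of_nonneg ht0]; exact ht1
  have h1 := ((hasSum_coe_mul_geometric_of_norm_lt_one hnorm).summable).mul_left (1 / (1 - ξ))
  have h2 := (hasSum_geometric_of_norm_lt_one hnorm).summable
  have h3 := h1.add h2
  apply h3.congr
  intro n; field_simp; ring

private lemma aux_abs (c t rr ss : ℝ) (hc : 0 ≤ c) (ht : 0 ≤ t)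
    (hr0 : 0 ≤ rr) (hr1 : rr ≤ 1) (hs0 : 0 ≤ ss) (hs1 : ss ≤ 1) (n : ℕ) :
    |c * (-1) ^ n * t ^ n * rr * ss| ≤ c * t ^ n := by
  have htn : (0:ℝ) ≤ t ^ n := pow_nonneg ht n
  have h : |c * (-1) ^ n * t ^ n * rr * ss| = c * t ^ n * rr * ss := by
    rw [abs_mul, abs_mul, abs_mul, abs_mul, abs_pow, abs_neg, abs_one, one_pow, mul_one,
      abs_of_nonneg hc, abs_of_nonneg htn, abs_of_nonneg hr0, abs_of_nonneg hs0]
  rw [h]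
  calc c * t ^ n * rr * ss ≤ c * t ^ n * rr := by
        exact mul_le_of_le_one_right (by positivity) hs1
    _ ≤ c * t ^ n := mul_le_of_le_one_right (by positivity) hr1

private lemma aux_int (X e : ℝ) (he : 0 ≤ e) :
    ∫ s in (0:ℝ)..1, X * s ^ e = X * (1 / (e + 1)) := by
  rw [intervalIntegral.integral_const_mul, integral_rpow (Or.inl (by linarith))]
  rw [Real.one_rpow, Real.zero_rpow (by linarith)]
  ring

theorem stmt_6 (μ ν δ ξ : ℝ) (hμ : 0 < μ) (hν : 0 < ν) (hδ : 0 < δ)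
    (hξ0 : 0 ≤ ξ) (hξ1 : ξ < 1) (g : ℝ → ℝ)
    (hg : ∀ t ∈ Ico (0:ℝ) 1,
      (1 + g t) / 2 =
        ∫ r in (0:ℝ)..1, ∫ s in (0:ℝ)..1,
          (1 - ξ * (1 + t * r ^ (ν / δ) * s ^ (μ / δ))) /
            ((1 - ξ) * (1 + t * r ^ (ν / δ) * s ^ (μ / δ)) ^ 2)) :
    ∀ t ∈ Ico (0:ℝ) 1,
      g t = 1 + (2 * δ ^ 2 / (1 - ξ)) *
          ∑' n : ℕ, (-1 : ℝ) ^ (n + 1) * ((n : ℝ) + 2 - ξ) * t ^ (n + 1) /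
            ((((n : ℝ) + 1) * ν + δ) * (((n : ℝ) + 1) * μ + δ)) := by
  intro t ht
  obtain ⟨ht0, ht1⟩ := ht
  set a : ℝ := ν / δ with ha
  set b : ℝ := μ / δ with hb
  have ha0 : 0 < a := div_pos hν hδ
  have hb0 : 0 < b := div_pos hμ hδ
  have hξ : (1 : ℝ) - ξ ≠ 0 := by linarith
  set c : ℕ → ℝ := fun n => ((n : ℝ) + 1 - ξ) / (1 - ξ) with hcdef
  have hc : ∀ n : ℕ, 0 ≤ c n := by
    intro n
    apply div_nonneg _ (by linarith)
    have : (0:ℝ) ≤ (n:ℝ) := Nat.cast_nonneg n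
    linarith
  -- exponent helpers
  have hmeas : ∀ (C e : ℝ), 0 ≤ e →
      AEStronglyMeasurable (fun s : ℝ => C * s ^ e) (volume.restrict (Set.uIoc (0:ℝ) 1)) := by
    intro C e he
    exact (continuous_const.mul (Real.continuous_rpow_const he)).aestronglyMeasurable
  have hsummable := aux_summable ξ t hξ1 ht0 ht1
  -- Step 1: inner integral
  have inner : ∀ r : ℝ, 0 ≤ r → r ≤ 1 →
      HasSum (fun n : ℕ => c n * (-1) ^ n * t ^ n * r ^ (a * (n:ℕ)) * (1 / (b * n + 1)))
        (∫ s in (0:ℝ)..1,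
          (1 - ξ * (1 + t * r ^ a * s ^ b)) / ((1 - ξ) * (1 + t * r ^ a * s ^ b) ^ 2)) := by
    intro r hr0 hr1
    have hra0 : 0 ≤ r ^ a := Real.rpow_nonneg hr0 a
    have hra1 : r ^ a ≤ 1 := Real.rpow_le_one hr0 hr1 ha0.le
    have key := intervalIntegral.hasSum_integral_of_dominated_convergence
      (F := fun n : ℕ => fun s : ℝ => c n * (-1) ^ n * t ^ n * r ^ (a * (n:ℕ)) * s ^ (b * (n:ℕ)))
      (bound := fun n : ℕ => fun _ : ℝ => c n * t ^ n)
      (f := fun s : ℝ =>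
        (1 - ξ * (1 + t * r ^ a * s ^ b)) / ((1 - ξ) * (1 + t * r ^ a * s ^ b) ^ 2))
      (a := (0:ℝ)) (b := (1:ℝ)) (μ := volume)
      (fun n => hmeas _ _ (by positivity))
      ?_ ?_ ?_ ?_
    · have : ∀ n : ℕ, (∫ s in (0:ℝ)..1,
          c n * (-1) ^ n * t ^ n * r ^ (a * (n:ℕ)) * s ^ (b * (n:ℕ)))
          = c n * (-1) ^ n * t ^ n * r ^ (a * (n:ℕ)) * (1 / (b * n + 1)) := by
        intro n
        rw [aux_int _ _ (by positivity)]
      rw [funext this] at key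
      exact key
    · intro n
      filter_upwards with s hs
      rw [Set.uIoc_of_le (by norm_num : (0:ℝ) ≤ 1)] at hs
      have hs0 : 0 ≤ s := le_of_lt hs.1
      have hraa0 : 0 ≤ r ^ (a * (n:ℕ)) := Real.rpow_nonneg hr0 _
      have hraa1 : r ^ (a * (n:ℕ)) ≤ 1 := Real.rpow_le_one hr0 hr1 (by positivity)
      have hsb0 : 0 ≤ s ^ (b * (n:ℕ)) := Real.rpow_nonneg hs0 _
      have hsb1 : s ^ (b * (n:ℕ)) ≤ 1 := Real.rpow_le_one hs0 hs.2 (by positivity)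
      exact aux_abs (c n) t _ _ (hc n) ht0 hraa0 hraa1 hsb0 hsb1 n
    · filter_upwards with s _
      exact hsummable
    · exact intervalIntegrable_const
    · filter_upwards with s hs
      rw [Set.uIoc_of_le (by norm_num : (0:ℝ) ≤ 1)] at hs
      have hs0 : 0 ≤ s := le_of_lt hs.1
      have hsb0 : 0 ≤ s ^ b := Real.rpow_nonneg hs0 b
      have hsb1 : s ^ b ≤ 1 := Real.rpow_le_one hs0 hs.2 hb0.le
      set u : ℝ := t * r ^ a * s ^ b with hu
      have hu0 : 0 ≤ u := by positivity
      have hu1 : u < 1 := by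
        calc u ≤ t * 1 * 1 := by
              apply mul_le_mul (mul_le_mul le_rfl hra1 hra0 ht0) hsb1 hsb0 (by positivity)
          _ < 1 := by linarith
      have hmain := aux_hasSum ξ hξ1 u hu0 hu1
      have heq : (fun n : ℕ => (((n : ℝ) + 1 - ξ) / (1 - ξ)) * (-u) ^ n)
          = fun n : ℕ => c n * (-1) ^ n * t ^ n * r ^ (a * (n:ℕ)) * s ^ (b * (n:ℕ)) := by
        funext n
        have h1 : r ^ (a * (n:ℕ)) = (r ^ a) ^ n := by
          rw [Real.rpow_mul hr0, Real.rpow_natCast]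
        have h2 : s ^ (b * (n:ℕ)) = (s ^ b) ^ n := by
          rw [Real.rpow_mul hs0, Real.rpow_natCast]
        have hun : u ^ n = t ^ n * (r ^ a) ^ n * (s ^ b) ^ n := by
          rw [hu, mul_pow, mul_pow]
        rw [h1, h2, neg_pow, hun, hcdef]
        ring
      rw [heq] at hmain
      exact hmain
  -- Step 2: outer integral
  have outer : HasSum
      (fun n : ℕ => c n * (-1) ^ n * t ^ n * (1 / (b * n + 1)) * (1 / (a * n + 1)))
      (∫ r in (0:ℝ)..1, ∫ s in (0:ℝ)..1,
        (1 - ξ * (1 + t * r ^ a * s ^ b)) / ((1 - ξ) * (1 + t * r ^ a * s ^ b) ^ 2)) := by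
    have key := intervalIntegral.hasSum_integral_of_dominated_convergence
      (F := fun n : ℕ => fun r : ℝ =>
        (c n * (-1) ^ n * t ^ n * (1 / (b * n + 1))) * r ^ (a * (n:ℕ)))
      (bound := fun n : ℕ => fun _ : ℝ => c n * t ^ n)
      (f := fun r : ℝ => ∫ s in (0:ℝ)..1,
        (1 - ξ * (1 + t * r ^ a * s ^ b)) / ((1 - ξ) * (1 + t * r ^ a * s ^ b) ^ 2))
      (a := (0:ℝ)) (b := (1:ℝ)) (μ := volume)
      (fun n => hmeas _ _ (by positivity))
      ?_ ?_ ?_ ?_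
    · have heval : ∀ n : ℕ, (∫ r in (0:ℝ)..1,
          (c n * (-1) ^ n * t ^ n * (1 / (b * n + 1))) * r ^ (a * (n:ℕ)))
          = c n * (-1) ^ n * t ^ n * (1 / (b * n + 1)) * (1 / (a * n + 1)) := by
        intro n
        rw [aux_int _ _ (by positivity)]
      rw [funext heval] at key
      exact key
    · intro n
      filter_upwards with r hr
      rw [Set.uIoc_of_le (by norm_num : (0:ℝ) ≤ 1)] at hr
      have hr0 : 0 ≤ r := le_of_lt hr.1
      have hraa0 : 0 ≤ r ^ (a * (n:ℕ)) := Real.rpow_nonneg hr0 _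
      have hraa1 : r ^ (a * (n:ℕ)) ≤ 1 := Real.rpow_le_one hr0 hr.2 (by positivity)
      have hb1 : 1 / (b * (n:ℕ) + 1) ≤ 1 := by
        rw [div_le_one (by positivity)]
        have : (0:ℝ) ≤ b * n := by positivity
        linarith
      have := aux_abs (c n) t (1 / (b * (n:ℕ) + 1)) (r ^ (a * (n:ℕ)))
        (hc n) ht0 (by positivity) hb1 hraa0 hraa1 n
      calc ‖c n * (-1) ^ n * t ^ n * (1 / (b * n + 1)) * r ^ (a * (n:ℕ))‖
          = |c n * (-1) ^ n * t ^ n * (1 / (b * (n:ℕ) + 1)) * r ^ (a * (n:ℕ))| := rfl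
        _ ≤ c n * t ^ n := this
    · filter_upwards with r _
      exact hsummable
    · exact intervalIntegrable_const
    · filter_upwards with r hr
      rw [Set.uIoc_of_le (by norm_num : (0:ℝ) ≤ 1)] at hr
      have h := inner r (le_of_lt hr.1) hr.2
      have heq : (fun n : ℕ => c n * (-1) ^ n * t ^ n * r ^ (a * (n:ℕ)) * (1 / (b * n + 1)))
          = fun n : ℕ => (c n * (-1) ^ n * t ^ n * (1 / (b * n + 1))) * r ^ (a * (n:ℕ)) := by
        funext n; ring
      rwa [heq] at h
  -- identify with f n
  set f : ℕ → ℝ := fun n => (-1) ^ n * ((n : ℝ) + 1 - ξ) * t ^ n *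
    (δ ^ 2 / ((1 - ξ) * (((n:ℝ) * ν + δ) * ((n:ℝ) * μ + δ)))) with hfdef
  have hterm : (fun n : ℕ => c n * (-1) ^ n * t ^ n * (1 / (b * n + 1)) * (1 / (a * n + 1)))
      = f := by
    funext n
    have hnν : (0:ℝ) < (n:ℝ) * ν + δ := by positivity
    have hnμ : (0:ℝ) < (n:ℝ) * μ + δ := by positivity
    have h1 : a * (n:ℕ) + 1 = ((n:ℝ) * ν + δ) / δ := by
      rw [ha]; field_simp
    have h2 : b * (n:ℕ) + 1 = ((n:ℝ) * μ + δ) / δ := by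
      rw [hb]; field_simp
    rw [hfdef, hcdef, h1, h2, one_div_div, one_div_div]
    field_simp
  rw [hterm] at outer
  set I : ℝ := ∫ r in (0:ℝ)..1, ∫ s in (0:ℝ)..1,
      (1 - ξ * (1 + t * r ^ a * s ^ b)) / ((1 - ξ) * (1 + t * r ^ a * s ^ b) ^ 2) with hIdef
  have hf0 : f 0 = 1 := by
    have h1ξ : (0:ℝ) < 1 - ξ := by linarith
    rw [hfdef]
    simp only [Nat.cast_zero, pow_zero, zero_mul, zero_add, one_mul]
    rw [show (1 - ξ) * 1 * (δ ^ 2 / ((1 - ξ) * (δ * δ)))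
        = ((1 - ξ) * δ ^ 2) / ((1 - ξ) * (δ * δ)) from by ring,
      div_eq_one_iff_eq (by positivity)]
    ring
  have hshift : HasSum (fun n : ℕ => f (n + 1)) (I - 1) := by
    rw [← hf0]
    refine (hasSum_nat_add_iff 1).mpr ?_
    simpa using outer
  have hgoal : HasSum
      (fun n : ℕ => (-1 : ℝ) ^ (n + 1) * ((n : ℝ) + 2 - ξ) * t ^ (n + 1) /
        ((((n : ℝ) + 1) * ν + δ) * (((n : ℝ) + 1) * μ + δ)))
      ((1 - ξ) / δ ^ 2 * (I - 1)) := by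
    have h := hshift.mul_left ((1 - ξ) / δ ^ 2)
    have heq : (fun n : ℕ => (1 - ξ) / δ ^ 2 * f (n + 1))
        = fun n : ℕ => (-1 : ℝ) ^ (n + 1) * ((n : ℝ) + 2 - ξ) * t ^ (n + 1) /
          ((((n : ℝ) + 1) * ν + δ) * (((n : ℝ) + 1) * μ + δ)) := by
      funext n
      have hnν : (0:ℝ) < ((n:ℝ) + 1) * ν + δ := by positivity
      have hnμ : (0:ℝ) < ((n:ℝ) + 1) * μ + δ := by positivity
      rw [hfdef]
      push_cast
      field_simp
      ring
    rw [heq] at h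
    exact h
  rw [hgoal.tsum_eq]
  have hgt := hg t ⟨ht0, ht1⟩
  rw [← hIdef] at hgt
  have hδ2 : δ ^ 2 ≠ 0 := by positivity
  have hkey : 2 * δ ^ 2 / (1 - ξ) * ((1 - ξ) / δ ^ 2 * (I - 1)) = 2 * (I - 1) := by
    field_simp
  rw [hkey]
  linarith
end
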